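/- Let t > 0 and let f : [0,t] → [0,1] be continuous and strictly decreasing on (0,t). For θ ∈ (θ_{f(t)}, 2π − θ_{f(t)}), set ℓ(θ) = 0 if f(0) ≤ sin(θ/2), and otherwise let ℓ(θ) be the unique s ∈ (0,t) with f(s) = sin(θ/2). Then for every continuous function g : ∂D → ℂ, (1/t) ∫_0^t (∫_{∂D} g dν_{f(s)}) ds = ∫_{θ_{f(t)}}^{2π − θ_{f(t)}} g(e^{iθ}) · D_t(θ) dθ, where D_t(θ) = (1/(2πt)) ∫_{ℓ(θ)}^{t} sin(θ/2)/√(sin²(θ/2) − f(s)²) ds. In particular, the average measure σ_t = (1/t)∫_0^t ν_{f(s)} ds is absolutely continuous with density D_t and support {e^{iθ} : θ_{f(t)} ≤ θ ≤ 2π − θ_{f(t)}}. -/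

import Mathlib

open Filter MeasureTheory Set Real

noncomputable section

def thetaA (a : ℝ) : ℝ := 2 * Real.arcsin a

namespace Stmt18Aux

/-- the singular kernel -/
def ker (a θ : ℝ) : ℝ := Real.sin (θ/2) / Real.sqrt (Real.sin (θ/2)^2 - a^2)

lemma ker_eq_zero {a θ : ℝ} (h : Real.sin (θ/2)^2 ≤ a^2) : ker a θ = 0 := by
  unfold ker
  rw [Real.sqrt_eq_zero'.mpr (by linarith), div_zero]

lemma ker_nonneg {a θ : ℝ} (h0 : 0 ≤ θ) (h2 : θ ≤ 2*Real.pi) : 0 ≤ ker a θ := by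
  unfold ker
  exact div_nonneg (Real.sin_nonneg_of_nonneg_of_le_pi (by linarith) (by linarith)) (Real.sqrt_nonneg _)

lemma thetaA_nonneg {a : ℝ} (h : 0 ≤ a) : 0 ≤ thetaA a := by
  have := Real.arcsin_nonneg.2 h; unfold thetaA; linarith

lemma thetaA_le_pi (a : ℝ) : thetaA a ≤ Real.pi := by
  have := Real.arcsin_le_pi_div_two a; unfold thetaA; linarith

lemma thetaA_mono {a b : ℝ} (h : a ≤ b) : thetaA a ≤ thetaA b := by
  have := Real.monotone_arcsin h; unfold thetaA; linarith

/-- vanishing of the kernel outside the arc -/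
lemma ker_vanish {a b2 θ : ℝ} (ha0 : 0 ≤ a) (ha1 : a ≤ 1) (hb2 : 0 ≤ b2)
    (h : θ ∈ Icc b2 (thetaA a) ∪ Icc (2*Real.pi - thetaA a) (2*Real.pi - b2)) :
    ker a θ = 0 := by
  have harc0 : 0 ≤ Real.arcsin a := Real.arcsin_nonneg.2 ha0
  have harc2 : Real.arcsin a ≤ Real.pi/2 := Real.arcsin_le_pi_div_two a
  have hsin : Real.sin (θ/2) ≤ a ∧ 0 ≤ Real.sin (θ/2) := by
    rcases h with h | h
    · have h1 : 0 ≤ θ/2 := by linarith [h.1]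
      have h2 : θ/2 ≤ Real.arcsin a := by have := h.2; unfold thetaA at this; linarith
      constructor
      · calc Real.sin (θ/2) ≤ Real.sin (Real.arcsin a) := by
              apply Real.strictMonoOn_sin.monotoneOn ⟨by linarith, by linarith⟩
                ⟨by linarith, by linarith⟩ h2
        _ = a := Real.sin_arcsin (by linarith) ha1
      · exact Real.sin_nonneg_of_nonneg_of_le_pi h1 (by linarith [Real.pi_pos])
    · have h1 : Real.pi - θ/2 ≤ Real.arcsin a := by
        have := h.1; unfold thetaA at this; linarith
      have h2 : 0 ≤ Real.pi - θ/2 := by have := h.2; unfold thetaA at this; linarith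
      have hrw : Real.sin (θ/2) = Real.sin (Real.pi - θ/2) := by
        rw [Real.sin_pi_sub]
      constructor
      · rw [hrw]
        calc Real.sin (Real.pi - θ/2) ≤ Real.sin (Real.arcsin a) := by
              apply Real.strictMonoOn_sin.monotoneOn ⟨by linarith, by linarith⟩
                ⟨by linarith, by linarith⟩ h1
        _ = a := Real.sin_arcsin (by linarith) ha1
      · rw [hrw]
        exact Real.sin_nonneg_of_nonneg_of_le_pi h2 (by linarith)
  exact ker_eq_zero (sq_le_sq' (by linarith [hsin.1, hsin.2]) hsin.1)

/-- core mass computation via FTC -/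
lemma mass_core {a : ℝ} (ha0 : 0 ≤ a) (ha1 : a < 1) :
    IntegrableOn (ker a) (Set.Ioc (thetaA a) (2*Real.pi - thetaA a)) ∧
      ∫ θ in Set.Ioc (thetaA a) (2*Real.pi - thetaA a), ker a θ = 2*Real.pi := by
  have pi_pos := Real.pi_pos
  set c0 : ℝ := Real.sqrt (1 - a^2) with hc0def
  have h1a : (0:ℝ) < 1 - a^2 := by nlinarith
  have hc0 : 0 < c0 := Real.sqrt_pos.2 h1a
  have hc0sq : c0^2 = 1 - a^2 := Real.sq_sqrt h1a.le
  have harc0 : 0 ≤ Real.arcsin a := Real.arcsin_nonneg.2 ha0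
  have harc2 : Real.arcsin a ≤ Real.pi/2 := Real.arcsin_le_pi_div_two a
  have hta2 : thetaA a / 2 = Real.arcsin a := by unfold thetaA; ring
  have hcosarc : Real.cos (thetaA a / 2) = c0 := by rw [hta2, Real.cos_arcsin]
  have hle : thetaA a ≤ 2*Real.pi - thetaA a := by
    have := thetaA_le_pi a; linarith
  set G : ℝ → ℝ := fun θ => -2 * Real.arcsin (Real.cos (θ/2) / c0) with hGdef
  have hGcont : Continuous G := by
    apply continuous_const.mul
    exact Real.continuous_arcsin.comp ((Real.continuous_cos.comp (continuous_id.div_const 2)).div_const c0)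
  have hbounds : ∀ θ ∈ Set.Ioo (thetaA a) (2*Real.pi - thetaA a),
      -c0 < Real.cos (θ/2) ∧ Real.cos (θ/2) < c0 := by
    intro θ hθ
    have hm1 : thetaA a / 2 ∈ Set.Icc 0 Real.pi := ⟨by rw [hta2]; linarith, by rw [hta2]; linarith⟩
    have hm2 : θ/2 ∈ Set.Icc 0 Real.pi := ⟨by have := hθ.1; rw [← hta2] at *; linarith [hm1.1], by have := hθ.2; linarith [hm1.1]⟩
    have hm3 : Real.pi - thetaA a / 2 ∈ Set.Icc 0 Real.pi := ⟨by rw [hta2]; linarith, by rw [hta2]; linarith⟩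
    constructor
    · rw [← hcosarc, ← Real.cos_pi_sub]
      exact Real.strictAntiOn_cos hm2 hm3 (by have := hθ.2; linarith)
    · rw [← hcosarc]
      exact Real.strictAntiOn_cos hm1 hm2 (by have := hθ.1; linarith)
  have hpos : ∀ θ ∈ Set.Ioo (thetaA a) (2*Real.pi - thetaA a),
      0 < Real.sin (θ/2)^2 - a^2 := by
    intro θ hθ
    have hb := hbounds θ hθ
    have : Real.cos (θ/2)^2 < c0^2 := sq_lt_sq' hb.1 hb.2
    have hs := Real.sin_sq_add_cos_sq (θ/2)
    nlinarith
  have hderiv : ∀ θ ∈ Set.Ioo (thetaA a) (2*Real.pi - thetaA a),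
      HasDerivAt G (ker a θ) θ := by
    intro θ hθ
    have hb := hbounds θ hθ
    have hp := hpos θ hθ
    set x : ℝ := Real.cos (θ/2) / c0 with hxdef
    have hx1 : -1 < x := by rw [hxdef]; rw [lt_div_iff₀ hc0]; linarith [hb.1]
    have hx2 : x < 1 := by rw [hxdef]; rw [div_lt_iff₀ hc0]; linarith [hb.2]
    have d1 : HasDerivAt (fun θ : ℝ => Real.cos (θ/2) / c0)
        (-Real.sin (θ/2) * (1/2) / c0) θ := by
      have dh : HasDerivAt (fun θ : ℝ => θ/2) (1/2) θ := by
        simpa using (hasDerivAt_id θ).div_const 2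
      exact ((Real.hasDerivAt_cos (θ/2)).comp θ dh).div_const c0
    have d2 : HasDerivAt Real.arcsin (1 / Real.sqrt (1 - x^2)) x :=
      Real.hasDerivAt_arcsin (by linarith) (by linarith)
    have d3 := ((d2.comp θ d1).const_mul (-2))
    refine HasDerivAt.congr_deriv d3 ?_
    have h1x : 1 - x^2 = (Real.sin (θ/2)^2 - a^2) / c0^2 := by
      rw [hxdef, div_pow]
      have hs := Real.sin_sq_add_cos_sq (θ/2)
      field_simp
      nlinarith
    have hsq : Real.sqrt (1 - x^2) = Real.sqrt (Real.sin (θ/2)^2 - a^2) / c0 := by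
      rw [h1x, Real.sqrt_div hp.le, Real.sqrt_sq hc0.le]
    have hS : 0 < Real.sqrt (Real.sin (θ/2)^2 - a^2) := Real.sqrt_pos.2 hp
    rw [hsq]
    unfold ker
    field_simp
  have hnonneg : ∀ θ ∈ Set.Ioo (thetaA a) (2*Real.pi - thetaA a), 0 ≤ ker a θ := by
    intro θ hθ
    have h0 : 0 ≤ thetaA a := thetaA_nonneg ha0
    exact ker_nonneg (by linarith [hθ.1]) (by linarith [hθ.2])
  have hint : IntegrableOn (ker a) (Set.Ioc (thetaA a) (2*Real.pi - thetaA a)) :=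
    intervalIntegral.integrableOn_deriv_of_nonneg hGcont.continuousOn hderiv hnonneg
  refine ⟨hint, ?_⟩
  have hII : IntervalIntegrable (ker a) volume (thetaA a) (2*Real.pi - thetaA a) :=
    (intervalIntegrable_iff_integrableOn_Ioc_of_le hle).2 hint
  have hFTC := intervalIntegral.integral_eq_sub_of_hasDeriv_right_of_le hle
    hGcont.continuousOn (fun x hx => (hderiv x hx).hasDerivWithinAt) hII
  rw [← intervalIntegral.integral_of_le hle, hFTC]
  have e1 : G (2*Real.pi - thetaA a) = Real.pi := by
    have : (2*Real.pi - thetaA a)/2 = Real.pi - thetaA a / 2 := by ring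
    rw [hGdef]
    simp only [this, Real.cos_pi_sub, hcosarc]
    rw [neg_div, div_self hc0.ne', Real.arcsin_neg, Real.arcsin_one]
    ring
  have e2 : G (thetaA a) = -Real.pi := by
    rw [hGdef]
    simp only [hcosarc]
    rw [div_self hc0.ne', Real.arcsin_one]
    ring
  rw [e1, e2]; ring

lemma extend_integral {E : Type*} [NormedAddCommGroup E] [NormedSpace ℝ E] {b b' c' c : ℝ}
    (h1 : b ≤ b') (h2 : b' ≤ c') (h3 : c' ≤ c) {X : ℝ → E}
    (z1 : ∀ θ ∈ Set.Icc b b', X θ = 0) (z2 : ∀ θ ∈ Set.Icc c' c, X θ = 0)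
    (hint : IntegrableOn X (Set.Ioc b' c')) :
    IntegrableOn X (Set.Ioc b c) ∧
      ∫ θ in Set.Ioc b c, X θ = ∫ θ in Set.Ioc b' c', X θ := by
  have i1 : IntegrableOn X (Set.Ioc b b') :=
    (integrableOn_zero : IntegrableOn (fun _ : ℝ => (0:E)) _ _).congr_fun
      (fun θ hθ => (z1 θ (Set.Ioc_subset_Icc_self hθ)).symm) measurableSet_Ioc
  have i2 : IntegrableOn X (Set.Ioc c' c) :=
    (integrableOn_zero : IntegrableOn (fun _ : ℝ => (0:E)) _ _).congr_fun
      (fun θ hθ => (z2 θ (Set.Ioc_subset_Icc_self hθ)).symm) measurableSet_Ioc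
  have hu1 : Set.Ioc b' c' ∪ Set.Ioc c' c = Set.Ioc b' c := Set.Ioc_union_Ioc_eq_Ioc h2 h3
  have hu2 : Set.Ioc b b' ∪ Set.Ioc b' c = Set.Ioc b c := Set.Ioc_union_Ioc_eq_Ioc h1 (h2.trans h3)
  have hiu : IntegrableOn X (Set.Ioc b' c) := by rw [← hu1]; exact hint.union i2
  have hall : IntegrableOn X (Set.Ioc b c) := by rw [← hu2]; exact i1.union hiu
  refine ⟨hall, ?_⟩
  have d1 : Disjoint (Set.Ioc b b') (Set.Ioc b' c) := Set.Ioc_disjoint_Ioc_of_le le_rfl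
  have d2 : Disjoint (Set.Ioc b' c') (Set.Ioc c' c) := Set.Ioc_disjoint_Ioc_of_le le_rfl
  have e1 : ∫ θ in Set.Ioc b b', X θ = 0 := by
    rw [MeasureTheory.setIntegral_congr_fun measurableSet_Ioc
      (fun θ hθ => z1 θ (Set.Ioc_subset_Icc_self hθ))]
    simp
  have e2 : ∫ θ in Set.Ioc c' c, X θ = 0 := by
    rw [MeasureTheory.setIntegral_congr_fun measurableSet_Ioc
      (fun θ hθ => z2 θ (Set.Ioc_subset_Icc_self hθ))]
    simp
  rw [← hu2, MeasureTheory.setIntegral_union d1 measurableSet_Ioc i1 hiu, e1, zero_add,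
    ← hu1, MeasureTheory.setIntegral_union d2 measurableSet_Ioc hint i2, e2, add_zero]

lemma mass {a b2 : ℝ} (ha0 : 0 ≤ a) (ha1 : a < 1) (hb0 : 0 ≤ b2) (hb : b2 ≤ thetaA a) :
    IntegrableOn (ker a) (Set.Ioc b2 (2*Real.pi - b2)) ∧
      ∫ θ in Set.Ioc b2 (2*Real.pi - b2), ker a θ = 2*Real.pi := by
  have h3 : 2*Real.pi - thetaA a ≤ 2*Real.pi - b2 := by linarith
  have h2 : thetaA a ≤ 2*Real.pi - thetaA a := by have := thetaA_le_pi a; linarith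
  have core := mass_core ha0 ha1
  have hext := extend_integral hb h2 h3
    (fun θ hθ => ker_vanish ha0 ha1.le hb0 (Or.inl hθ))
    (fun θ hθ => ker_vanish ha0 ha1.le hb0 (Or.inr hθ)) core.1
  exact ⟨hext.1, hext.2.trans core.2⟩

end Stmt18Aux

/-- Integral of `g` against the equilibrium measure `ν_a` of the circular arc `Γ_a`
(for `a = 1`, `ν_1 = δ_{-1}`). -/
def nuInt (a : ℝ) (g : ℂ → ℂ) : ℂ :=
  if a = 1 then g (-1)
  else ∫ θ in thetaA a..(2 * Real.pi - thetaA a),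
    ((1 / (2 * Real.pi) * Real.sin (θ / 2) /
        Real.sqrt (Real.cos (thetaA a / 2) ^ 2 - Real.cos (θ / 2) ^ 2) : ℝ) : ℂ) *
      g (Complex.exp (θ * Complex.I))

set_option maxHeartbeats 4000000 in
theorem stmt18 (t : ℝ) (ht : 0 < t) (f : ℝ → ℝ)
    (hmap : ∀ s ∈ Set.Icc (0 : ℝ) t, f s ∈ Set.Icc (0 : ℝ) 1)
    (hcont : ContinuousOn f (Set.Icc (0 : ℝ) t))
    (hmono : StrictAntiOn f (Set.Ioo (0 : ℝ) t))
    (l : ℝ → ℝ)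
    (hl : ∀ θ ∈ Set.Ioo (thetaA (f t)) (2 * Real.pi - thetaA (f t)),
      (f 0 ≤ Real.sin (θ / 2) → l θ = 0) ∧
      (Real.sin (θ / 2) < f 0 → l θ ∈ Set.Ioo (0 : ℝ) t ∧ f (l θ) = Real.sin (θ / 2)))
    (g : ℂ → ℂ) (hg : Continuous g) :
    (t : ℂ)⁻¹ * (∫ s in (0 : ℝ)..t, nuInt (f s) g)
      = ∫ θ in thetaA (f t)..(2 * Real.pi - thetaA (f t)),
          g (Complex.exp (θ * Complex.I)) *
            (((1 / (2 * Real.pi * t)) *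
              ∫ s in (l θ)..t,
                Real.sin (θ / 2) / Real.sqrt (Real.sin (θ / 2) ^ 2 - f s ^ 2) : ℝ) : ℂ) := by
  classical
  have pi_pos := Real.pi_pos
  obtain ⟨hft0, hft1⟩ := hmap t ⟨ht.le, le_rfl⟩
  set a0 : ℝ := thetaA (f t) with ha0def
  set c : ℝ := 2 * Real.pi - a0 with hcdef
  have ha00 : 0 ≤ a0 := Stmt18Aux.thetaA_nonneg hft0
  have ha0pi : a0 ≤ Real.pi := Stmt18Aux.thetaA_le_pi _
  have hac : a0 ≤ c := by rw [hcdef]; linarith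
  have hc2pi : c ≤ 2 * Real.pi := by rw [hcdef]; linarith
  -- continuous global extension of f
  set q : ℝ → ℝ := fun s => max 0 (min s t) with hqdef
  have hqcont : Continuous q := continuous_const.max (continuous_id.min continuous_const)
  have hqmem : ∀ s, q s ∈ Set.Icc (0 : ℝ) t :=
    fun s => ⟨le_max_left _ _, max_le ht.le (min_le_right _ _)⟩
  set F : ℝ → ℝ := fun s => f (q s) with hFdef
  have hFcont : Continuous F := hcont.comp_continuous hqcont hqmem
  have hFeq : ∀ s ∈ Set.Icc (0 : ℝ) t, F s = f s := by
    intro s hs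
    have hq : q s = s := by
      rw [hqdef]; simp only [min_eq_left hs.2, max_eq_right hs.1]
    rw [hFdef]; simp only [hq]
  have hfs1 : ∀ s ∈ Set.Ioo (0 : ℝ) t, f s < 1 := by
    intro s hs
    by_contra hcon
    push_neg at hcon
    have h2 : s / 2 ∈ Set.Ioo (0 : ℝ) t := ⟨by linarith [hs.1], by linarith [hs.1, hs.2]⟩
    have hlt := hmono h2 hs (by linarith [hs.1])
    have := (hmap (s / 2) ⟨h2.1.le, h2.2.le⟩).2
    linarith
  have hfts : ∀ s ∈ Set.Ioo (0 : ℝ) t, f t ≤ f s := by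
    intro s hs
    have hne : (nhdsWithin t (Set.Ioo s t)).NeBot := right_nhdsWithin_Ioo_neBot hs.2
    have htt : Filter.Tendsto f (nhdsWithin t (Set.Ioo s t)) (nhds (f t)) :=
      (hcont t ⟨ht.le, le_rfl⟩).mono
        (fun u hu => ⟨le_trans hs.1.le hu.1.le, hu.2.le⟩) |>.tendsto
    refine le_of_tendsto htt ?_
    filter_upwards [eventually_mem_nhdsWithin] with u hu
    exact (hmono hs ⟨lt_trans hs.1 hu.1, hu.2⟩ hu.1).le
  set H : ℝ → ℝ → ℂ := fun s θ =>
    ((1 / (2 * Real.pi) * Stmt18Aux.ker (F s) θ : ℝ) : ℂ) * g (Complex.exp (θ * Complex.I))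
    with hHdef
  obtain ⟨M, hM⟩ : ∃ M, ∀ θ ∈ Set.Icc (0 : ℝ) (2 * Real.pi),
      ‖g (Complex.exp (θ * Complex.I))‖ ≤ M := by
    have hcomp : ContinuousOn (fun θ : ℝ => g (Complex.exp (θ * Complex.I)))
        (Set.Icc 0 (2 * Real.pi)) :=
      (hg.comp (Complex.continuous_exp.comp
        (Complex.continuous_ofReal.mul continuous_const))).continuousOn
    exact isCompact_Icc.exists_bound_of_continuousOn hcomp
  have hM0 : 0 ≤ M := le_trans (norm_nonneg _) (hM 0 ⟨le_rfl, by linarith⟩)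
  have hker_meas : Measurable (fun p : ℝ × ℝ => Stmt18Aux.ker (F p.1) p.2) := by
    have h1 : Continuous (fun p : ℝ × ℝ => Real.sin (p.2 / 2)) :=
      Real.continuous_sin.comp (continuous_snd.div_const 2)
    have h2 : Continuous (fun p : ℝ × ℝ => Real.sqrt (Real.sin (p.2 / 2) ^ 2 - F p.1 ^ 2)) :=
      Real.continuous_sqrt.comp ((h1.pow 2).sub ((hFcont.comp continuous_fst).pow 2))
    simp only [Stmt18Aux.ker]
    exact h1.measurable.div h2.measurable
  have hgexp_meas : Measurable (fun p : ℝ × ℝ => g (Complex.exp (↑p.2 * Complex.I))) :=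
    (hg.comp (Complex.continuous_exp.comp
      ((Complex.continuous_ofReal.comp continuous_snd).mul continuous_const))).measurable
  have hH_meas : Measurable (Function.uncurry H) := by
    simp only [hHdef, Function.uncurry]
    exact (Complex.measurable_ofReal.comp (hker_meas.const_mul _)).mul hgexp_meas
  have haeIoo : ∀ᵐ s ∂(volume.restrict (Set.Ioc (0 : ℝ) t)), s ∈ Set.Ioo (0 : ℝ) t := by
    rw [← Measure.restrict_congr_set Ioo_ae_eq_Ioc]
    exact ae_restrict_mem measurableSet_Ioo
  have haeIooθ : ∀ᵐ θ ∂(volume.restrict (Set.Ioc a0 c)), θ ∈ Set.Ioo a0 c := by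
    rw [← Measure.restrict_congr_set Ioo_ae_eq_Ioc]
    exact ae_restrict_mem measurableSet_Ioo
  have hsIoo_facts : ∀ s ∈ Set.Ioo (0 : ℝ) t,
      IntegrableOn (Stmt18Aux.ker (F s)) (Set.Ioc a0 c) ∧
        ∫ θ in Set.Ioc a0 c, Stmt18Aux.ker (F s) θ = 2 * Real.pi := by
    intro s hs
    have hsI : s ∈ Set.Icc (0 : ℝ) t := ⟨hs.1.le, hs.2.le⟩
    have h0 : (0 : ℝ) ≤ f s := (hmap s hsI).1
    have h1 : f s < 1 := hfs1 s hs
    have hmono' : a0 ≤ thetaA (f s) := by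
      rw [ha0def]; exact Stmt18Aux.thetaA_mono (hfts s hs)
    rw [hFeq s hsI, hcdef]
    exact Stmt18Aux.mass h0 h1 ha00 hmono'
  have step1 : ∀ s ∈ Set.Ioo (0 : ℝ) t, nuInt (f s) g = ∫ θ in Set.Ioc a0 c, H s θ := by
    intro s hs
    have hsI : s ∈ Set.Icc (0 : ℝ) t := ⟨hs.1.le, hs.2.le⟩
    have h0 : (0 : ℝ) ≤ f s := (hmap s hsI).1
    have h1 : f s < 1 := hfs1 s hs
    have hta0 : a0 ≤ thetaA (f s) := by
      rw [ha0def]; exact Stmt18Aux.thetaA_mono (hfts s hs)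
    have htapi : thetaA (f s) ≤ Real.pi := Stmt18Aux.thetaA_le_pi _
    have htann : 0 ≤ thetaA (f s) := Stmt18Aux.thetaA_nonneg h0
    have hle2 : thetaA (f s) ≤ 2 * Real.pi - thetaA (f s) := by linarith
    have hcge : 2 * Real.pi - thetaA (f s) ≤ c := by rw [hcdef]; linarith
    rw [nuInt, if_neg h1.ne]
    have hz : ∀ θ, Stmt18Aux.ker (f s) θ = 0 → H s θ = 0 := by
      intro θ h
      have hzz : Stmt18Aux.ker (F s) θ = 0 := by rw [hFeq s hsI]; exact h
      simp [hHdef, hzz]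
    have hinteq : ∀ θ : ℝ,
        ((1 / (2 * Real.pi) * Real.sin (θ / 2) /
          Real.sqrt (Real.cos (thetaA (f s) / 2) ^ 2 - Real.cos (θ / 2) ^ 2) : ℝ) : ℂ) *
          g (Complex.exp (θ * Complex.I)) = H s θ := by
      intro θ
      have hta2 : thetaA (f s) / 2 = Real.arcsin (f s) := by unfold thetaA; ring
      have hcos : Real.cos (thetaA (f s) / 2) ^ 2 = 1 - f s ^ 2 := by
        rw [hta2, Real.cos_arcsin, Real.sq_sqrt (by nlinarith)]
      have hsc := Real.sin_sq_add_cos_sq (θ / 2)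
      have harg : Real.cos (thetaA (f s) / 2) ^ 2 - Real.cos (θ / 2) ^ 2
          = Real.sin (θ / 2) ^ 2 - f s ^ 2 := by rw [hcos]; linarith
      rw [hHdef]
      simp only [Stmt18Aux.ker, hFeq s hsI, harg, mul_div_assoc]
    rw [intervalIntegral.integral_congr (g := H s) (fun θ _ => hinteq θ),
      intervalIntegral.integral_of_le hle2]
    have hkint : IntegrableOn (Stmt18Aux.ker (f s))
        (Set.Ioc (thetaA (f s)) (2 * Real.pi - thetaA (f s))) := (Stmt18Aux.mass_core h0 h1).1
    have hHsm : AEStronglyMeasurable (H s)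
        (volume.restrict (Set.Ioc (thetaA (f s)) (2 * Real.pi - thetaA (f s)))) :=
      (hH_meas.comp (measurable_const.prodMk measurable_id)).aestronglyMeasurable
    have hHint : IntegrableOn (H s) (Set.Ioc (thetaA (f s)) (2 * Real.pi - thetaA (f s))) := by
      apply Integrable.mono'
        (g := fun θ => M * (1 / (2 * Real.pi) * Stmt18Aux.ker (f s) θ))
        (((hkint.const_mul (1 / (2 * Real.pi))).const_mul M)) hHsm
      filter_upwards [ae_restrict_mem measurableSet_Ioc] with θ hθ
      have hθ0 : 0 ≤ θ := le_trans htann hθ.1.le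
      have hθ2 : θ ≤ 2 * Real.pi := by linarith [hθ.2]
      have hknn : 0 ≤ Stmt18Aux.ker (f s) θ := Stmt18Aux.ker_nonneg hθ0 hθ2
      have hgn : ‖g (Complex.exp (θ * Complex.I))‖ ≤ M := hM θ ⟨hθ0, hθ2⟩
      have hFf : Stmt18Aux.ker (F s) θ = Stmt18Aux.ker (f s) θ := by rw [hFeq s hsI]
      simp only [hHdef]
      rw [norm_mul, Complex.norm_real, hFf,
        Real.norm_of_nonneg (by positivity)]
      calc 1 / (2 * Real.pi) * Stmt18Aux.ker (f s) θ * ‖g (Complex.exp (θ * Complex.I))‖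
          ≤ 1 / (2 * Real.pi) * Stmt18Aux.ker (f s) θ * M := by
            apply mul_le_mul_of_nonneg_left hgn (by positivity)
        _ = M * (1 / (2 * Real.pi) * Stmt18Aux.ker (f s) θ) := by ring
    obtain ⟨hi, he⟩ := Stmt18Aux.extend_integral hta0 hle2 hcge
      (fun θ hθ => hz θ (Stmt18Aux.ker_vanish h0 h1.le ha00 (Or.inl hθ)))
      (fun θ hθ => hz θ (Stmt18Aux.ker_vanish h0 h1.le ha00
        (Or.inr (by rw [hcdef] at hθ; exact hθ))))
      hHint
    exact he.symm
  have hKKint : Integrable (fun p : ℝ × ℝ => Stmt18Aux.ker (F p.1) p.2)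
      ((volume.restrict (Set.Ioc (0 : ℝ) t)).prod (volume.restrict (Set.Ioc a0 c))) := by
    refine (integrable_prod_iff hker_meas.aestronglyMeasurable).2 ⟨?_, ?_⟩
    · filter_upwards [haeIoo] with s hs
      exact (hsIoo_facts s hs).1
    · apply Integrable.congr (show Integrable (fun _ : ℝ => 2 * Real.pi)
        (volume.restrict (Set.Ioc (0 : ℝ) t)) from
        integrableOn_const measure_Ioc_lt_top.ne)
      filter_upwards [haeIoo] with s hs
      have hfact := hsIoo_facts s hs
      rw [MeasureTheory.setIntegral_congr_fun (g := Stmt18Aux.ker (F s)) measurableSet_Ioc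
        (fun θ hθ => Real.norm_of_nonneg
          (Stmt18Aux.ker_nonneg (le_trans ha00 hθ.1.le) (le_trans hθ.2 hc2pi))) ] at *
      exact hfact.2.symm
  have hHint2 : Integrable (Function.uncurry H)
      ((volume.restrict (Set.Ioc (0 : ℝ) t)).prod (volume.restrict (Set.Ioc a0 c))) := by
    apply Integrable.mono'
      (g := fun p : ℝ × ℝ => (1 / (2 * Real.pi) * M) * Stmt18Aux.ker (F p.1) p.2)
      (hKKint.const_mul _) hH_meas.aestronglyMeasurable
    rw [Measure.prod_restrict]
    filter_upwards [ae_restrict_mem (measurableSet_Ioc.prod measurableSet_Ioc)] with p hp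
    obtain ⟨hp1, hp2⟩ := hp
    have hθ0 : 0 ≤ p.2 := le_trans ha00 hp2.1.le
    have hθ2 : p.2 ≤ 2 * Real.pi := le_trans hp2.2 hc2pi
    have hknn : 0 ≤ Stmt18Aux.ker (F p.1) p.2 := Stmt18Aux.ker_nonneg hθ0 hθ2
    have hgn : ‖g (Complex.exp (p.2 * Complex.I))‖ ≤ M := hM p.2 ⟨hθ0, hθ2⟩
    simp only [hHdef, Function.uncurry]
    rw [norm_mul, Complex.norm_real, Real.norm_of_nonneg (by positivity)]
    calc 1 / (2 * Real.pi) * Stmt18Aux.ker (F p.1) p.2 * ‖g (Complex.exp (p.2 * Complex.I))‖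
        ≤ 1 / (2 * Real.pi) * Stmt18Aux.ker (F p.1) p.2 * M :=
          mul_le_mul_of_nonneg_left hgn (by positivity)
      _ = 1 / (2 * Real.pi) * M * Stmt18Aux.ker (F p.1) p.2 := by ring
  have haeintθ : ∀ᵐ θ ∂(volume.restrict (Set.Ioc a0 c)),
      Integrable (fun s => Stmt18Aux.ker (F s) θ) (volume.restrict (Set.Ioc (0 : ℝ) t)) := by
    exact hKKint.prod_left_ae
  -- rewrite both sides to set integrals over Ioc
  rw [intervalIntegral.integral_of_le ht.le, intervalIntegral.integral_of_le hac]
  have hLcongr : ∫ s in Set.Ioc (0 : ℝ) t, nuInt (f s) g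
      = ∫ s in Set.Ioc (0 : ℝ) t, (∫ θ in Set.Ioc a0 c, H s θ) :=
    integral_congr_ae (haeIoo.mono fun s hs => step1 s hs)
  have hswap : ∫ s in Set.Ioc (0 : ℝ) t, (∫ θ in Set.Ioc a0 c, H s θ)
      = ∫ θ in Set.Ioc a0 c, (∫ s in Set.Ioc (0 : ℝ) t, H s θ) :=
    integral_integral_swap hHint2
  rw [hLcongr, hswap, ← MeasureTheory.integral_const_mul]
  apply integral_congr_ae
  filter_upwards [haeIooθ, haeintθ] with θ hθ hintθ
  have hsin0 : 0 ≤ Real.sin (θ / 2) := by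
    apply Real.sin_nonneg_of_nonneg_of_le_pi
    · linarith [hθ.1, ha00]
    · have := hθ.2; rw [hcdef] at this; linarith [ha00]
  have hII : IntervalIntegrable (fun s => Stmt18Aux.ker (F s) θ) volume 0 t :=
    (intervalIntegrable_iff_integrableOn_Ioc_of_le ht.le).2 hintθ
  obtain ⟨hl1, hl2⟩ := hl θ hθ
  have hlmem : l θ ∈ Set.Icc (0 : ℝ) t := by
    rcases le_or_gt (f 0) (Real.sin (θ / 2)) with h | h
    · rw [hl1 h]; exact ⟨le_rfl, ht.le⟩
    · exact ⟨(hl2 h).1.1.le, (hl2 h).1.2.le⟩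
  have hsplit : ∫ s in (0 : ℝ)..t, Stmt18Aux.ker (F s) θ
      = ∫ s in (l θ)..t, Stmt18Aux.ker (F s) θ := by
    rcases le_or_gt (f 0) (Real.sin (θ / 2)) with h | h
    · rw [hl1 h]
    · obtain ⟨hlo, hfl⟩ := hl2 h
      have hIIa : IntervalIntegrable (fun s => Stmt18Aux.ker (F s) θ) volume 0 (l θ) := by
        apply hII.mono_set
        rw [Set.uIcc_of_le hlo.1.le, Set.uIcc_of_le ht.le]
        exact Set.Icc_subset_Icc le_rfl hlo.2.le
      have hIIb : IntervalIntegrable (fun s => Stmt18Aux.ker (F s) θ) volume (l θ) t := by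
        apply hII.mono_set
        rw [Set.uIcc_of_le hlo.2.le, Set.uIcc_of_le ht.le]
        exact Set.Icc_subset_Icc hlo.1.le le_rfl
      rw [← intervalIntegral.integral_add_adjacent_intervals hIIa hIIb]
      have hzero : ∫ s in (0 : ℝ)..(l θ), Stmt18Aux.ker (F s) θ = 0 := by
        rw [intervalIntegral.integral_congr (g := fun _ => (0:ℝ)) ?_,
          intervalIntegral.integral_zero]
        intro s hs
        rw [Set.uIcc_of_le hlo.1.le] at hs
        have hsI : s ∈ Set.Icc (0 : ℝ) t := ⟨hs.1, hs.2.trans hlo.2.le⟩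
        have hge : Real.sin (θ / 2) ≤ f s := by
          rcases eq_or_lt_of_le hs.1 with he | h0s
          · rw [← he]; exact h.le
          · rcases eq_or_lt_of_le hs.2 with he2 | hslt
            · rw [he2, hfl]
            · rw [← hfl]; exact (hmono ⟨h0s, hslt.trans hlo.2⟩ hlo hslt).le
        have hk : Stmt18Aux.ker (F s) θ = 0 := by
          rw [hFeq s hsI]
          exact Stmt18Aux.ker_eq_zero (by nlinarith)
        exact hk
      rw [hzero, zero_add]
  have hcongr2 : ∫ s in (l θ)..t, Stmt18Aux.ker (F s) θ
      = ∫ s in (l θ)..t, Real.sin (θ / 2) / Real.sqrt (Real.sin (θ / 2) ^ 2 - f s ^ 2) := by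
    apply intervalIntegral.integral_congr
    intro s hs
    rw [Set.uIcc_of_le hlmem.2] at hs
    have hsI : s ∈ Set.Icc (0 : ℝ) t := ⟨le_trans hlmem.1 hs.1, hs.2⟩
    simp only [Stmt18Aux.ker, hFeq s hsI]
  have hinner : ∫ s in Set.Ioc (0 : ℝ) t, H s θ
      = ((1 / (2 * Real.pi))
          * ∫ s in Set.Ioc (0 : ℝ) t, Stmt18Aux.ker (F s) θ) • g (Complex.exp (θ * Complex.I)) := by
    simp only [hHdef]
    rw [show (fun s => ((1 / (2 * Real.pi) * Stmt18Aux.ker (F s) θ : ℝ) : ℂ)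
          * g (Complex.exp (θ * Complex.I)))
        = fun s => (1 / (2 * Real.pi) * Stmt18Aux.ker (F s) θ) • g (Complex.exp (θ * Complex.I))
      from funext fun s => (Complex.real_smul).symm]
    rw [integral_smul_const, MeasureTheory.integral_const_mul]
  rw [hinner, ← intervalIntegral.integral_of_le ht.le, hsplit, hcongr2]
  set J : ℝ := ∫ s in (l θ)..t, Real.sin (θ / 2) / Real.sqrt (Real.sin (θ / 2) ^ 2 - f s ^ 2)
    with hJdef
  have halg : (1 / (2 * Real.pi * t)) * J = t⁻¹ * (1 / (2 * Real.pi) * J) := by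
    field_simp
  rw [Complex.real_smul, halg]
  push_cast
  ring

end
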